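/- arXiv:1407.7262 — 2 statements merged into one kernel-verified Lean document; each statement's English description precedes it below -/
import Mathlib

section
/- Let B_w be the unilateral weighted backward shift on ℓ¹ with weight sequence w_k = ln(k+2)/ln(k+1). Then B_w is hypercyclic on ℓ¹ (since w_1 w_2 ⋯ w_k = ln(k+2)/ln 2 → ∞), but B_w is not q-frequently hypercyclic on ℓ¹ in the norm topology for any positive integer q. -/
open Filter Set
open scoped ENNReal

/-- The `q`-lower density of a set `A ⊆ ℕ`:
`liminf_{N→∞} card {n ∈ A : n ≤ N^q} / N`. -/
noncomputable def qLowerDensity (q : ℕ) (A : Set ℕ) : ℝ≥0∞ :=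
  Filter.atTop.liminf fun N : ℕ => (Set.ncard {n ∈ A | n ≤ N ^ q} : ℝ≥0∞) / (N : ℝ≥0∞)

/-- `T` is `q`-frequently hypercyclic. -/
def qFrequentlyHypercyclic {X : Type*} [TopologicalSpace X] (q : ℕ) (T : X → X) : Prop :=
  ∃ x : X, ∀ U : Set X, IsOpen U → U.Nonempty →
    0 < qLowerDensity q {n : ℕ | T^[n] x ∈ U}

/-- `T` is hypercyclic: some orbit is dense. -/
def Hypercyclic {X : Type*} [TopologicalSpace X] (T : X → X) : Prop :=
  ∃ x : X, Dense (Set.range fun n : ℕ => T^[n] x)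

noncomputable abbrev LX := lp (fun _ : ℕ => ℂ) 1

noncomputable def fsAt (g : ℕ → ℂ) (s : Finset ℕ) : LX :=
  ∑ i ∈ s, lp.single 1 i (g i)

lemma fsAt_apply (g : ℕ → ℂ) (s : Finset ℕ) (k : ℕ) :
    fsAt g s k = if k ∈ s then g k else 0 := by
  simp only [fsAt, lp.coeFn_sum, Finset.sum_apply, lp.single_apply, Pi.single_apply, Finset.sum_ite_eq, Finset.sum_dite_eq]

lemma norm_fsAt_le (g : ℕ → ℂ) (s : Finset ℕ) : ‖fsAt g s‖ ≤ ∑ i ∈ s, ‖g i‖ := by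
  refine (norm_sum_le _ _).trans_eq ?_
  exact Finset.sum_congr rfl fun i _ => lp.norm_single (E := fun _ : ℕ => ℂ) (p := 1) (by norm_num) i (g i)

lemma fsAt_sub (a b : ℕ → ℂ) (s : Finset ℕ) :
    fsAt a s - fsAt b s = fsAt (a - b) s := by
  apply lp.ext; funext k
  simp only [lp.coeFn_sub, Pi.sub_apply, fsAt_apply]
  by_cases h : k ∈ s <;> simp [h]

lemma exists_trunc (x : LX) {ε : ℝ} (hε : 0 < ε) :
    ∃ m : ℕ, ∀ m' : ℕ, m ≤ m' → ‖x - fsAt (⇑x) (Finset.range m')‖ < ε := by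
  have hs : HasSum (fun i : ℕ => lp.single 1 i (x i)) x := lp.hasSum_single (by norm_num) x
  have ht := hs.tendsto_sum_nat
  rw [Metric.tendsto_atTop] at ht
  obtain ⟨m, hm⟩ := ht ε hε
  exact ⟨m, fun m' hm' => by
    have := hm m' hm'
    rwa [dist_eq_norm, norm_sub_rev] at this⟩

noncomputable def ratC (p : ℚ × ℚ) : ℂ := ⟨(p.1 : ℝ), (p.2 : ℝ)⟩

lemma exists_ratC_near (z : ℂ) {δ : ℝ} (hδ : 0 < δ) : ∃ p : ℚ × ℚ, ‖z - ratC p‖ < δ := by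
  obtain ⟨q1, hq1⟩ := exists_rat_near z.re (half_pos hδ)
  obtain ⟨q2, hq2⟩ := exists_rat_near z.im (half_pos hδ)
  refine ⟨(q1, q2), ?_⟩
  calc ‖z - ratC (q1, q2)‖ ≤ |(z - ratC (q1, q2)).re| + |(z - ratC (q1, q2)).im| :=
        Complex.norm_le_abs_re_add_abs_im _
    _ = |z.re - (q1 : ℝ)| + |z.im - (q2 : ℝ)| := by simp [ratC, Complex.sub_re, Complex.sub_im]
    _ < δ / 2 + δ / 2 := by gcongr
    _ = δ := by ring

lemma exists_countable_dense_LX : ∃ D : Set LX, D.Countable ∧ Dense D := by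
  refine ⟨Set.range (fun L : List (ℚ × ℚ) =>
    fsAt (fun i => ratC (L.getD i (0, 0))) (Finset.range L.length)), Set.countable_range _, ?_⟩
  refine Metric.denseRange_iff.2 fun x r hr => ?_
  obtain ⟨m, hm⟩ := exists_trunc x (half_pos hr)
  have hδ : 0 < r / (2 * (m + 1)) := by positivity
  have hq : ∀ i : ℕ, ∃ p : ℚ × ℚ, ‖x i - ratC p‖ < r / (2 * (m + 1)) :=
    fun i => exists_ratC_near (x i) hδ
  choose q hqlt using hq
  refine ⟨List.ofFn (fun i : Fin m => q i), ?_⟩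
  set c : ℕ → ℂ := fun i => ratC ((List.ofFn (fun i : Fin m => q i)).getD i (0, 0)) with hc
  have hlen : (List.ofFn (fun i : Fin m => q i)).length = m := List.length_ofFn
  rw [dist_eq_norm, hlen]
  have hcq : ∀ i ∈ Finset.range m, c i = ratC (q i) := by
    intro i hi
    rw [Finset.mem_range] at hi
    simp [hc, List.getD_eq_getElem?_getD, List.getElem?_ofFn, List.ofFnNthVal, hi]
  calc ‖x - fsAt c (Finset.range m)‖
      ≤ ‖x - fsAt (⇑x) (Finset.range m)‖ + ‖fsAt (⇑x) (Finset.range m) - fsAt c (Finset.range m)‖ := by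
        have := norm_sub_le_norm_sub_add_norm_sub x (fsAt (⇑x) (Finset.range m)) (fsAt c (Finset.range m))
        exact this
    _ < r / 2 + r / 2 := by
        refine add_lt_add_of_lt_of_le (hm m le_rfl) ?_
        rw [fsAt_sub]
        refine (norm_fsAt_le _ _).trans ?_
        calc ∑ i ∈ Finset.range m, ‖(⇑x - c) i‖
            ≤ ∑ i ∈ Finset.range m, (r / (2 * (m + 1))) := by
              refine Finset.sum_le_sum fun i hi => ?_
              rw [Pi.sub_apply, hcq i hi]
              exact (hqlt i).le
          _ = m * (r / (2 * (m + 1))) := by rw [Finset.sum_const, Finset.card_range]; ring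
          _ ≤ r / 2 := by
              have h1 : (m : ℝ) * (r / (2 * (m + 1))) = r * m / (2 * (m + 1)) := by ring
              rw [h1, div_le_div_iff₀ (by positivity) (by positivity)]
              nlinarith [hr.le]
    _ = r := by ring

lemma birkhoff {X : Type*} [MetricSpace X] [BaireSpace X] [Nonempty X] {f : X → X}
    (hf : Continuous f) {D : Set X} (hDc : D.Countable) (hD : Dense D)
    (htrans : ∀ U V : Set X, IsOpen U → U.Nonempty → IsOpen V → V.Nonempty →
      ∃ (n : ℕ) (z : X), z ∈ U ∧ f^[n] z ∈ V) :
    ∃ x : X, Dense (Set.range fun n : ℕ => f^[n] x) := by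
  haveI : Countable D := hDc.to_subtype
  set G : D × ℕ → Set X := fun p => ⋃ n : ℕ, f^[n] ⁻¹' Metric.ball (p.1 : X) (1 / (p.2 + 1))
    with hG
  have hGopen : ∀ p, IsOpen (G p) := fun p =>
    isOpen_iUnion fun n => (Metric.isOpen_ball).preimage (hf.iterate n)
  have hGdense : ∀ p, Dense (G p) := by
    intro p
    rw [dense_iff_inter_open]
    intro U hU hUne
    obtain ⟨n, z, hz, hz'⟩ := htrans U (Metric.ball (p.1 : X) (1 / (p.2 + 1))) hU hUne
      Metric.isOpen_ball ⟨p.1, Metric.mem_ball_self (by positivity)⟩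
    exact ⟨z, hz, Set.mem_iUnion.2 ⟨n, hz'⟩⟩
  have hbig : Dense (⋂ p, G p) := dense_iInter_of_isOpen hGopen hGdense
  obtain ⟨x, hx⟩ := hbig.nonempty
  refine ⟨x, Metric.dense_iff.2 fun y r hr => ?_⟩
  obtain ⟨d, hdball, hdD⟩ := Metric.dense_iff.1 hD y (r / 2) (by linarith)
  obtain ⟨k, hk⟩ := exists_nat_one_div_lt (show (0:ℝ) < r / 2 by linarith)
  have hxG := Set.mem_iInter.1 hx (⟨d, hdD⟩, k)
  obtain ⟨n, hn⟩ := Set.mem_iUnion.1 hxG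
  refine ⟨f^[n] x, ?_, Set.mem_range_self n⟩
  have h1 : dist (f^[n] x) d < 1 / (k + 1) := hn
  have h2 : dist d y < r / 2 := Metric.mem_ball.1 hdball
  rw [Metric.mem_ball]
  calc dist (f^[n] x) y ≤ dist (f^[n] x) d + dist d y := dist_triangle _ _ _
    _ < 1 / (k + 1) + r / 2 := by gcongr
    _ < r / 2 + r / 2 := by linarith [hk]
    _ = r := by ring

lemma logpos (r : ℝ) (hr : 0 ≤ r) : 0 < Real.log (r + 2) :=
  Real.log_pos (by linarith)

lemma prod_w (w : ℕ → ℝ) (hw : ∀ k : ℕ, 1 ≤ k → w k = Real.log (k + 2) / Real.log (k + 1))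
    (j n : ℕ) :
    ∏ k ∈ Finset.range n, w (j + k + 1)
      = Real.log ((j : ℝ) + n + 2) / Real.log ((j : ℝ) + 2) := by
  induction n with
  | zero =>
    simp [div_self (logpos (j : ℝ) (by positivity)).ne']
  | succ n ih =>
    rw [Finset.prod_range_succ, ih, hw (j + n + 1) (by omega)]
    push_cast
    rw [div_mul_div_comm]
    rw [show (j : ℝ) + n + 1 + 2 = (j : ℝ) + (n + 1) + 2 by ring,
      show (j : ℝ) + n + 1 + 1 = (j : ℝ) + n + 2 by ring]
    rw [mul_comm (Real.log ((j : ℝ) + n + 2))]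
    rw [mul_div_mul_right _ _ (logpos ((j : ℝ) + n) (by positivity)).ne']

lemma iter_apply (w : ℕ → ℝ) (T : LX →L[ℂ] LX)
    (hT : ∀ (x : LX) (n : ℕ), T x n = (w (n + 1) : ℂ) * x (n + 1))
    (x : LX) (n j : ℕ) :
    (fun y => T y)^[n] x j
      = ((∏ k ∈ Finset.range n, w (j + k + 1) : ℝ) : ℂ) * x (j + n) := by
  induction n generalizing x with
  | zero => simp
  | succ n ih =>
    rw [Function.iterate_succ_apply, ih (T x), hT x (j + n), Finset.prod_range_succ]
    push_cast
    ring_nf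

lemma trans_T (w : ℕ → ℝ) (hw : ∀ k : ℕ, 1 ≤ k → w k = Real.log (k + 2) / Real.log (k + 1))
    (T : LX →L[ℂ] LX)
    (hT : ∀ (x : LX) (n : ℕ), T x n = (w (n + 1) : ℂ) * x (n + 1)) :
    ∀ U V : Set LX, IsOpen U → U.Nonempty → IsOpen V → V.Nonempty →
      ∃ (n : ℕ) (z : LX), z ∈ U ∧ (fun y => T y)^[n] z ∈ V := by
  intro U V hU hUne hV hVne
  obtain ⟨u, hu⟩ := hUne
  obtain ⟨v, hv⟩ := hVne
  obtain ⟨εu, hεu, hballU⟩ := Metric.isOpen_iff.1 hU u hu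
  obtain ⟨εv, hεv, hballV⟩ := Metric.isOpen_iff.1 hV v hv
  obtain ⟨m₁, hm₁⟩ := exists_trunc u (half_pos hεu)
  obtain ⟨m₂, hm₂⟩ := exists_trunc v hεv
  set m := max m₁ m₂ with hm
  have hu' : ‖u - fsAt (⇑u) (Finset.range m)‖ < εu / 2 := hm₁ m (le_max_left _ _)
  have hv' : ‖v - fsAt (⇑v) (Finset.range m)‖ < εv := hm₂ m (le_max_right _ _)
  set C : ℝ := ∑ j ∈ Finset.range m, ‖v j‖ * Real.log ((j : ℝ) + 2) with hC
  have hC0 : 0 ≤ C := Finset.sum_nonneg fun j _ =>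
    mul_nonneg (norm_nonneg _) (logpos (j : ℝ) (by positivity)).le
  -- choose n
  have hlog : Tendsto (fun n : ℕ => Real.log ((n : ℝ) + 2)) atTop atTop :=
    Real.tendsto_log_atTop.comp (tendsto_atTop_add_const_right _ 2 tendsto_natCast_atTop_atTop)
  obtain ⟨n, hn1, hn2⟩ := ((hlog.eventually_gt_atTop (2 * (C + 1) / εu)).and
    (eventually_ge_atTop m)).exists
  have hlogn : 0 < Real.log ((n : ℝ) + 2) := logpos _ (by positivity)
  have hCn : C / Real.log ((n : ℝ) + 2) < εu / 2 := by
    rw [div_lt_iff₀ hlogn]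
    have h := (div_lt_iff₀ hεu).1 hn1
    nlinarith
  -- the element z
  set s : Finset ℕ := (Finset.range m).image (fun j => n + j) with hs
  set g : ℕ → ℂ := fun k =>
    v (k - n) * ((Real.log (((k - n : ℕ) : ℝ) + 2) / Real.log ((k : ℝ) + 2) : ℝ) : ℂ) with hg
  set z : LX := fsAt (⇑u) (Finset.range m) + fsAt g s with hz
  have hmem : ∀ k, k ∈ s ↔ (n ≤ k ∧ k - n < m) := by
    intro k
    simp only [hs, Finset.mem_image, Finset.mem_range]
    constructor
    · rintro ⟨a, ha, rfl⟩; omega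
    · rintro ⟨h1, h2⟩; exact ⟨k - n, h2, by omega⟩
  refine ⟨n, z, ?_, ?_⟩
  · -- z ∈ U
    apply hballU
    rw [Metric.mem_ball, dist_eq_norm]
    have h1 : z - u = (fsAt (⇑u) (Finset.range m) - u) + fsAt g s := by rw [hz]; abel
    have hσ : ‖fsAt g s‖ < εu / 2 := by
      refine lt_of_le_of_lt (norm_fsAt_le _ _) ?_
      have himg : ∑ k ∈ s, ‖g k‖ = ∑ j ∈ Finset.range m, ‖g (n + j)‖ := by
        rw [hs, Finset.sum_image (fun a _ b _ h => by omega)]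
      rw [himg]
      refine lt_of_le_of_lt ?_ hCn
      rw [hC, Finset.sum_div]
      refine Finset.sum_le_sum fun j hj => ?_
      have hsub : n + j - n = j := by omega
      have hlognj : 0 < Real.log ((n : ℝ) + (j : ℝ) + 2) := logpos _ (by positivity)
      have hratio : 0 ≤ Real.log ((j : ℝ) + 2) / Real.log ((n : ℝ) + (j : ℝ) + 2) :=
        div_nonneg (logpos (j : ℝ) (by positivity)).le hlognj.le
      rw [hg]
      simp only [hsub]
      rw [norm_mul, Complex.norm_real]
      push_cast
      rw [Real.norm_eq_abs, abs_of_nonneg hratio, mul_div_assoc]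
      refine mul_le_mul_of_nonneg_left ?_ (norm_nonneg _)
      rw [div_le_div_iff₀ hlognj hlogn]
      refine mul_le_mul_of_nonneg_left ?_ (logpos (j : ℝ) (by positivity)).le
      exact Real.log_le_log (by positivity) (by linarith [Nat.cast_nonneg (α := ℝ) j])
    calc ‖z - u‖ ≤ ‖fsAt (⇑u) (Finset.range m) - u‖ + ‖fsAt g s‖ := by
          rw [h1]; exact norm_add_le _ _
      _ < εu / 2 + εu / 2 := by
          refine add_lt_add ?_ hσ
          rwa [norm_sub_rev]
      _ = εu := by ring
  · -- T^[n] z ∈ V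
    apply hballV
    have hTz : (fun y => T y)^[n] z = fsAt (⇑v) (Finset.range m) := by
      apply lp.ext; funext j
      rw [iter_apply w T hT z n j, prod_w w hw j n]
      have hzjn : z (j + n) = (if j < m then g (j + n) else 0) := by
        rw [hz]
        have : (fsAt (⇑u) (Finset.range m) + fsAt g s) (j + n)
            = fsAt (⇑u) (Finset.range m) (j + n) + fsAt g s (j + n) := by
          simp [lp.coeFn_add]
        rw [this, fsAt_apply, fsAt_apply]
        rw [if_neg (by simp only [Finset.mem_range]; omega)]
        rw [zero_add]
        by_cases hjm : j < m
        · rw [if_pos ((hmem (j + n)).2 ⟨by omega, by omega⟩), if_pos hjm]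
        · rw [if_neg (fun hk => hjm (by have := (hmem (j + n)).1 hk; omega)), if_neg hjm]
      rw [hzjn, fsAt_apply]
      by_cases hjm : j < m
      · rw [if_pos hjm, if_pos (Finset.mem_range.2 hjm)]
        rw [hg]
        have hsub : j + n - n = j := by omega
        simp only [hsub]
        have e1 : Real.log ((j : ℝ) + (n : ℝ) + 2) ≠ 0 := (logpos _ (by positivity)).ne'
        have e2 : Real.log ((j : ℝ) + 2) ≠ 0 := (logpos (j : ℝ) (by positivity)).ne'
        have e1' : ((Real.log ((j : ℝ) + (n : ℝ) + 2) : ℝ) : ℂ) ≠ 0 := Complex.ofReal_ne_zero.2 e1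
        have e2' : ((Real.log ((j : ℝ) + 2) : ℝ) : ℂ) ≠ 0 := Complex.ofReal_ne_zero.2 e2
        push_cast
        push_cast at e1' e2'
        field_simp
      · rw [if_neg hjm, if_neg (fun hk => hjm (Finset.mem_range.1 hk)), mul_zero]
    rw [hTz, Metric.mem_ball, dist_eq_norm, norm_sub_rev]
    exact hv'

set_option maxHeartbeats 2000000 in
lemma part2 (w : ℕ → ℝ) (hw : ∀ k : ℕ, 1 ≤ k → w k = Real.log (k + 2) / Real.log (k + 1))
    (T : LX →L[ℂ] LX)
    (hT : ∀ (x : LX) (n : ℕ), T x n = (w (n + 1) : ℂ) * x (n + 1))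
    (q : ℕ) (hq : 1 ≤ q) : ¬ qFrequentlyHypercyclic q (fun x : LX => T x) := by
  rintro ⟨x, hx⟩
  set e : LX := lp.single 1 0 (1 : ℂ) with he
  have hA := hx (Metric.ball e (1/2)) Metric.isOpen_ball
    ⟨e, Metric.mem_ball_self (by norm_num)⟩
  set A := {n : ℕ | (fun y : LX => T y)^[n] x ∈ Metric.ball e (1/2)} with hAdef
  -- summability of coordinates
  have hsum : HasSum (fun i : ℕ => ‖x i‖) ‖x‖ := by
    have h := lp.hasSum_norm (p := 1) (by norm_num) x
    simpa using h
  set S := ‖x‖ with hSdef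
  have hS0 : 0 ≤ S := norm_nonneg _
  have hS : ∀ s : Finset ℕ, ∑ i ∈ s, ‖x i‖ ≤ S :=
    fun s => sum_le_hasSum s (fun _ _ => norm_nonneg _) hsum
  -- coordinate lower bound on A
  have hxcoord : ∀ n ∈ A, Real.log 2 / (2 * Real.log ((n : ℝ) + 2)) ≤ ‖x n‖ := by
    intro n hn
    have hball : ‖(fun y : LX => T y)^[n] x - e‖ < 1/2 := by
      have := hn
      rw [hAdef, Set.mem_setOf_eq, Metric.mem_ball, dist_eq_norm] at this
      exact this
    have hcoord : ‖((fun y : LX => T y)^[n] x) 0 - 1‖ ≤ ‖(fun y : LX => T y)^[n] x - e‖ := by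
      have h := lp.norm_apply_le_norm (p := 1) one_ne_zero ((fun y : LX => T y)^[n] x - e) 0
      rwa [lp.coeFn_sub, Pi.sub_apply, he, lp.single_apply_self] at h
    have hval : ((fun y : LX => T y)^[n] x) 0
        = ((Real.log ((n : ℝ) + 2) / Real.log 2 : ℝ) : ℂ) * x n := by
      rw [iter_apply w T hT x n 0, prod_w w hw 0 n]
      rw [zero_add, Nat.cast_zero, zero_add, zero_add]
    set W : ℝ := Real.log ((n : ℝ) + 2) / Real.log 2 with hW
    have hWpos : 0 < W := div_pos (logpos _ (by positivity)) (Real.log_pos (by norm_num))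
    have h1 : ‖(W : ℂ) * x n - 1‖ < 1/2 := by
      rw [← hval]; exact lt_of_le_of_lt hcoord hball
    have h2 : (1 : ℝ) - 1/2 ≤ ‖(W : ℂ) * x n‖ := by
      have h5 := norm_sub_norm_le (1 : ℂ) ((W : ℂ) * x n)
      rw [norm_one, norm_sub_rev] at h5
      linarith
    have h3 : ‖(W : ℂ) * x n‖ = W * ‖x n‖ := by
      rw [norm_mul, Complex.norm_real, Real.norm_eq_abs, abs_of_pos hWpos]
    rw [h3] at h2
    have h4 : 1/2 ≤ W * ‖x n‖ := by linarith
    rw [hW] at h4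
    have hlog2 : 0 < Real.log 2 := Real.log_pos (by norm_num)
    have hlogn : 0 < Real.log ((n : ℝ) + 2) := logpos _ (by positivity)
    rw [div_le_iff₀ (by positivity)]
    rw [div_mul_eq_mul_div, le_div_iff₀ hlog2] at h4
    nlinarith
  -- density lower bound
  set L := qLowerDensity q A with hL
  have hc0 : (0 : ℝ≥0∞) < min L 1 := lt_min hA (by norm_num)
  set c : ℝ≥0∞ := min L 1 / 2 with hc
  have hcpos : 0 < c := ENNReal.half_pos hc0.ne'
  have hctop : c ≠ ⊤ := by
    refine ne_top_of_le_ne_top (by norm_num : (1:ℝ≥0∞) ≠ ⊤) ?_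
    calc c ≤ min L 1 := ENNReal.half_le_self
      _ ≤ 1 := min_le_right _ _
  have hcL : c < L := lt_of_lt_of_le
    (ENNReal.half_lt_self hc0.ne' (ne_top_of_le_ne_top (by norm_num) (min_le_right _ _)))
    (min_le_left _ _)
  set δ : ℝ := c.toReal with hδ
  have hδpos : 0 < δ := ENNReal.toReal_pos hcpos.ne' hctop
  have hev : ∀ᶠ N : ℕ in atTop,
      c < (Set.ncard {n ∈ A | n ≤ N ^ q} : ℝ≥0∞) / (N : ℝ≥0∞) :=
    Filter.eventually_lt_of_lt_liminf hcL
  -- main eventual inequality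
  have hmain : ∀ᶠ N : ℕ in atTop,
      δ * N * (Real.log 2 / (2 * Real.log ((N : ℝ) ^ q + 2))) ≤ S := by
    filter_upwards [hev, eventually_ge_atTop 2] with N hN hN2
    have hNR : (2 : ℝ) ≤ (N : ℝ) := by exact_mod_cast hN2
    have hfin : {n ∈ A | n ≤ N ^ q}.Finite :=
      (Set.finite_Iic (N ^ q)).subset (fun n hn => hn.2)
    set F : Finset ℕ := hfin.toFinset with hF
    have hcard : δ * N ≤ (F.card : ℝ) := by
      have hne0 : ((N : ℝ≥0∞)) ≠ 0 := by
        simp only [ne_eq, Nat.cast_eq_zero]; omega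
      have h1 : c * N < (Set.ncard {n ∈ A | n ≤ N ^ q} : ℝ≥0∞) := by
        rw [ENNReal.lt_div_iff_mul_lt (Or.inl hne0) (Or.inl (ENNReal.natCast_ne_top N))] at hN
        exact hN
      have h2 : (c * N).toReal < (Set.ncard {n ∈ A | n ≤ N ^ q} : ℝ) := by
        have := (ENNReal.toReal_lt_toReal (ENNReal.mul_ne_top hctop (ENNReal.natCast_ne_top N))
          (ENNReal.natCast_ne_top _)).2 h1
        simpa using this
      rw [ENNReal.toReal_mul] at h2
      simp only [ENNReal.toReal_natCast] at h2
      have hcardeq : Set.ncard {n ∈ A | n ≤ N ^ q} = F.card := by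
        rw [hF]; exact Set.ncard_eq_toFinset_card _ hfin
      rw [hcardeq] at h2
      exact le_of_lt h2
    have hlogNq : 0 < Real.log ((N : ℝ) ^ q + 2) := logpos _ (by positivity)
    have hbound : ∀ n ∈ F, Real.log 2 / (2 * Real.log ((N : ℝ) ^ q + 2)) ≤ ‖x n‖ := by
      intro n hn
      rw [hF, Set.Finite.mem_toFinset] at hn
      refine le_trans ?_ (hxcoord n hn.1)
      have hnN : ((n : ℝ) + 2) ≤ ((N : ℝ) ^ q + 2) := by
        have : (n : ℝ) ≤ ((N ^ q : ℕ) : ℝ) := by exact_mod_cast hn.2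
        rw [Nat.cast_pow] at this
        linarith
      refine div_le_div_of_nonneg_left (Real.log_pos (by norm_num)).le
        (by have := logpos (n : ℝ) (by positivity); linarith) ?_
      have := Real.log_le_log (by positivity) hnN
      linarith
    have hsumF : (F.card : ℝ) * (Real.log 2 / (2 * Real.log ((N : ℝ) ^ q + 2)))
        ≤ ∑ n ∈ F, ‖x n‖ := by
      calc (F.card : ℝ) * (Real.log 2 / (2 * Real.log ((N : ℝ) ^ q + 2)))
          = ∑ _n ∈ F, (Real.log 2 / (2 * Real.log ((N : ℝ) ^ q + 2))) := by
            rw [Finset.sum_const, nsmul_eq_mul]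
        _ ≤ ∑ n ∈ F, ‖x n‖ := Finset.sum_le_sum hbound
    have hpos : 0 ≤ Real.log 2 / (2 * Real.log ((N : ℝ) ^ q + 2)) := by positivity
    calc δ * N * (Real.log 2 / (2 * Real.log ((N : ℝ) ^ q + 2)))
        ≤ (F.card : ℝ) * (Real.log 2 / (2 * Real.log ((N : ℝ) ^ q + 2))) := by
          exact mul_le_mul_of_nonneg_right hcard hpos
      _ ≤ ∑ n ∈ F, ‖x n‖ := hsumF
      _ ≤ S := hS F
  -- contradiction via log = o(N)
  have hlog2 : 0 < Real.log 2 := Real.log_pos (by norm_num)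
  set P : ℝ := 2 * S * (q + 1) with hP
  have hPnn : 0 ≤ P := by positivity
  set ε : ℝ := δ * Real.log 2 / (2 * (P + 1)) with hε
  have hεpos : 0 < ε := by positivity
  have hlittle : ∀ᶠ t : ℝ in atTop, ‖Real.log t‖ ≤ ε * ‖t‖ :=
    Real.isLittleO_log_id_atTop.def hεpos
  have hlittleN : ∀ᶠ N : ℕ in atTop, Real.log (N : ℝ) ≤ ε * N := by
    have hcast : Tendsto (fun N : ℕ => (N : ℝ)) atTop atTop := tendsto_natCast_atTop_atTop
    filter_upwards [hcast.eventually hlittle, eventually_ge_atTop 1] with N h h1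
    have h1R : (1 : ℝ) ≤ (N : ℝ) := by exact_mod_cast h1
    have h2 : ‖Real.log (N : ℝ)‖ ≤ ε * (N : ℝ) := by
      calc ‖Real.log (N : ℝ)‖ ≤ ε * ‖(N : ℝ)‖ := h
        _ = ε * (N : ℝ) := by rw [Real.norm_eq_abs, abs_of_nonneg (by positivity)]
    rw [Real.norm_eq_abs] at h2
    exact (le_abs_self _).trans h2
  obtain ⟨N, hNmain, hNlog, hN2⟩ :=
    (hmain.and (hlittleN.and (eventually_ge_atTop 2))).exists
  have hNR : (2 : ℝ) ≤ (N : ℝ) := by exact_mod_cast hN2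
  have hlogN : 0 < Real.log (N : ℝ) := Real.log_pos (by linarith)
  have hNq2 : (N : ℝ) ^ q + 2 ≤ (N : ℝ) ^ (q + 1) := by
    have h2q : (2 : ℝ) ≤ (N : ℝ) ^ q := by
      calc (2 : ℝ) ≤ (N : ℝ) := hNR
        _ = (N : ℝ) ^ 1 := (pow_one _).symm
        _ ≤ (N : ℝ) ^ q := pow_le_pow_right₀ (by linarith) hq
    calc (N : ℝ) ^ q + 2 ≤ 2 * (N : ℝ) ^ q := by linarith
      _ ≤ (N : ℝ) * (N : ℝ) ^ q := by
          refine mul_le_mul_of_nonneg_right hNR ?_; positivity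
      _ = (N : ℝ) ^ (q + 1) := by rw [pow_succ]; ring
  have hlogNq : 0 < Real.log ((N : ℝ) ^ q + 2) := logpos _ (by positivity)
  have hlogb : Real.log ((N : ℝ) ^ q + 2) ≤ (q + 1) * Real.log (N : ℝ) := by
    calc Real.log ((N : ℝ) ^ q + 2) ≤ Real.log ((N : ℝ) ^ (q + 1)) :=
          Real.log_le_log (by positivity) hNq2
      _ = (q + 1) * Real.log (N : ℝ) := by
          rw [Real.log_pow]; push_cast; ring
  -- derive the contradiction
  have hkey : δ * N * Real.log 2 ≤ 2 * S * Real.log ((N : ℝ) ^ q + 2) := by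
    have h2L : (0:ℝ) < 2 * Real.log ((N : ℝ) ^ q + 2) := by linarith
    have h := mul_le_mul_of_nonneg_right hNmain h2L.le
    rw [mul_assoc (δ * (N : ℝ)), div_mul_cancel₀ _ h2L.ne'] at h
    linarith
  have hkey2 : δ * N * Real.log 2 ≤ P * Real.log (N : ℝ) := by
    calc δ * N * Real.log 2 ≤ 2 * S * Real.log ((N : ℝ) ^ q + 2) := hkey
      _ ≤ 2 * S * ((q + 1) * Real.log (N : ℝ)) := by
          refine mul_le_mul_of_nonneg_left hlogb (by positivity)
      _ = P * Real.log (N : ℝ) := by rw [hP]; ring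
  have hkey3 : δ * N * Real.log 2 ≤ P * (ε * N) := by
    refine hkey2.trans (mul_le_mul_of_nonneg_left hNlog hPnn)
  have hNpos : (0 : ℝ) < N := by linarith
  have hcancel : ε * (2 * (P + 1)) = δ * Real.log 2 := by
    rw [hε]; field_simp
  have h6 := mul_le_mul_of_nonneg_right hkey3 (by positivity : (0:ℝ) ≤ 2 * (P + 1))
  have h7 : P * (ε * N) * (2 * (P + 1)) = P * (N : ℝ) * (δ * Real.log 2) := by
    rw [← hcancel]; ring
  rw [h7] at h6
  nlinarith [mul_pos (mul_pos hδpos hlog2) hNpos,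
    mul_nonneg (mul_pos (mul_pos hδpos hlog2) hNpos).le hPnn]

set_option maxHeartbeats 1000000 in
/-- The unilateral weighted backward shift on `ℓ¹` with weights
`w k = ln(k+2)/ln(k+1)` (so `(B_w x)_n = w_{n+1} x_{n+1}`) is hypercyclic, but it is not
`q`-frequently hypercyclic in the norm topology for any positive integer `q`. -/
theorem hypercyclic_not_qFrequentlyHypercyclic_log_shift
    (w : ℕ → ℝ) (hw : ∀ k : ℕ, 1 ≤ k → w k = Real.log (k + 2) / Real.log (k + 1))
    (T : lp (fun _ : ℕ => ℂ) 1 →L[ℂ] lp (fun _ : ℕ => ℂ) 1)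
    (hT : ∀ (x : lp (fun _ : ℕ => ℂ) 1) (n : ℕ), T x n = (w (n + 1) : ℂ) * x (n + 1)) :
    Hypercyclic (fun x => T x) ∧
      ∀ q : ℕ, 1 ≤ q → ¬ qFrequentlyHypercyclic q (fun x => T x) := by
  constructor
  · haveI : Nonempty LX := ⟨0⟩
    obtain ⟨D, hDc, hD⟩ := exists_countable_dense_LX
    exact birkhoff T.continuous hDc hD (trans_T w hw T hT)
  · exact fun q hq => part2 w hw T hT q hq
end

section
/- Let (N_k)_{k≥1} be a strictly increasing sequence of natural numbers. Then there exists a sequence (J_k)_{k≥1} of pairwise disjoint subsets of ℕ such that: (1) each J_k has positive lower density; (2) |n − m| ≥ N_k + N_p whenever n ≠ m, n ∈ J_k and m ∈ J_p; and (3) n ≥ N_k for every n ∈ J_k and every k ≥ 1. -/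
open Filter Set
open scoped ENNReal

namespace DisjointDensityAux

variable (N : ℕ → ℕ)

/-- Weight attached to level `p`. -/
def u (p : ℕ) : ℕ := N p + 1

/-- Rapidly growing scales forming a divisibility chain. -/
def M : ℕ → ℕ
  | 0 => 1
  | p + 1 => M p * (2 * (N (p + 1) + 1))

lemma M_pos : ∀ p, 0 < M N p
  | 0 => one_pos
  | p + 1 => Nat.mul_pos (M_pos p) (by positivity)

lemma two_pow_le_M : ∀ p, 2 ^ p ≤ M N p
  | 0 => le_refl 1
  | p + 1 => by
      have h := two_pow_le_M p
      calc 2 ^ (p+1) = 2 ^ p * 2 := by ring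
        _ ≤ M N p * (2 * (N (p+1) + 1)) := by nlinarith
        _ = M N (p+1) := rfl

lemma M_dvd_M {p q : ℕ} (h : p ≤ q) : M N p ∣ M N q := by
  induction q with
  | zero => simp [Nat.le_zero.mp h]
  | succ q ih =>
    rcases Nat.lt_or_ge p (q+1) with h' | h'
    · exact (ih (Nat.lt_succ_iff.mp h')).mul_right _
    · have : p = q + 1 := le_antisymm h h'
      simp [this]

lemma two_mul_M_le (p : ℕ) : 2 * M N p ≤ M N (p + 1) := by
  show 2 * M N p ≤ M N p * (2 * (N (p+1) + 1))
  nlinarith [M_pos N p]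

lemma pow_mul_u_le : ∀ p, 1 ≤ p → 2 ^ p * u N p ≤ M N p
  | 1, _ => by simp [M, u]
  | p + 2, _ => by
      have h := pow_mul_u_le (p + 1) (Nat.le_add_left 1 p)
      have hu : 1 ≤ u N (p+1) := Nat.succ_le_succ (Nat.zero_le _)
      calc 2 ^ (p+2) * u N (p+2) = (2 ^ (p+1)) * (2 * u N (p+2)) := by ring
        _ ≤ (2 ^ (p+1) * u N (p+1)) * (2 * u N (p+2)) :=
            Nat.mul_le_mul_right _ (Nat.le_mul_of_pos_right _ hu)
        _ ≤ M N (p+1) * (2 * u N (p+2)) := Nat.mul_le_mul_right _ h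
        _ = M N (p+2) := rfl

/-- The level of an integer `t ≥ 1`: the largest `p` with `M p ∣ t`. -/
def lev (t : ℕ) : ℕ := Nat.findGreatest (fun p => M N p ∣ t) t

lemma lev_le (t : ℕ) : lev N t ≤ t := Nat.findGreatest_le t

lemma lev_zero : lev N 0 = 0 := rfl

lemma M_lev_dvd (t : ℕ) : M N (lev N t) ∣ t := by
  classical
  exact Nat.findGreatest_spec (P := fun p => M N p ∣ t) (Nat.zero_le t) (by simp [M])

lemma dvd_iff_le_lev {p t : ℕ} (ht : 1 ≤ t) : M N p ∣ t ↔ p ≤ lev N t := by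
  classical
  constructor
  · intro h
    have hMt : M N p ≤ t := Nat.le_of_dvd ht h
    have hpt : p ≤ t := le_trans (le_trans Nat.lt_two_pow_self.le (two_pow_le_M N p)) hMt
    exact Nat.le_findGreatest hpt h
  · intro h
    exact (M_dvd_M N h).trans (M_lev_dvd N t)

lemma lev_eq_iff {k t : ℕ} (ht : 1 ≤ t) :
    lev N t = k ↔ (M N k ∣ t ∧ ¬ M N (k+1) ∣ t) := by
  rw [dvd_iff_le_lev N ht, dvd_iff_le_lev N ht]
  omega

/-- The positions of the points. -/
def f : ℕ → ℕ
  | 0 => 0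
  | t + 1 => f t + u N (lev N t) + u N (lev N (t + 1))

lemma f_strictMono : StrictMono (f N) := by
  apply strictMono_nat_of_lt_succ
  intro t
  show f N t < f N t + u N (lev N t) + u N (lev N (t+1))
  have : 1 ≤ u N (lev N t) := Nat.succ_le_succ (Nat.zero_le _)
  omega

lemma u_le_f : ∀ t, 1 ≤ t → u N (lev N t) ≤ f N t
  | s + 1, _ => by
    show u N (lev N (s+1)) ≤ f N s + u N (lev N s) + u N (lev N (s+1))
    omega

lemma sep {t s : ℕ} (h : t < s) :
    f N t + u N (lev N t) + u N (lev N s) ≤ f N s := by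
  induction s with
  | zero => omega
  | succ s ih =>
    rcases Nat.lt_or_ge t s with h' | h'
    · have := ih h'
      have hs : f N (s+1) = f N s + u N (lev N s) + u N (lev N (s+1)) := rfl
      omega
    · have : t = s := by omega
      subst this
      exact le_refl _

lemma u_mono (hN : Monotone N) : Monotone (u N) := fun _ _ h => Nat.succ_le_succ (hN h)

lemma telescope (hN : Monotone N) (n : ℕ) :
    u N 0 + ∑ p ∈ Finset.Icc 1 n, (u N p - u N (p-1)) = u N n := by
  induction n with
  | zero => simp
  | succ n ih =>
    rw [Finset.sum_Icc_succ_top (by omega)]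
    have h1 : u N n ≤ u N (n+1) := u_mono N hN (by omega)
    simp only [Nat.add_sub_cancel]
    omega

lemma u_lev_eq (hN : Monotone N) (i : ℕ) (hi : 1 ≤ i) :
    u N (lev N i) = u N 0 + ∑ p ∈ Finset.Icc 1 i, (if M N p ∣ i then u N p - u N (p-1) else 0) := by
  rw [← Finset.sum_filter]
  have hfil : (Finset.Icc 1 i).filter (fun p => M N p ∣ i) = Finset.Icc 1 (lev N i) := by
    ext p
    simp only [Finset.mem_filter, Finset.mem_Icc]
    constructor
    · rintro ⟨⟨h1, _⟩, hd⟩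
      exact ⟨h1, (dvd_iff_le_lev N hi).mp hd⟩
    · rintro ⟨h1, h2⟩
      exact ⟨⟨h1, h2.trans (lev_le N i)⟩, (dvd_iff_le_lev N hi).mpr h2⟩
  rw [hfil, telescope N hN]

lemma sum_halves (t : ℕ) : ∀ m, (∑ p ∈ Finset.Icc 1 m, t / 2 ^ p) + t / 2 ^ m ≤ t := by
  intro m
  induction m with
  | zero => simp
  | succ m ih =>
    rw [Finset.sum_Icc_succ_top (by omega)]
    have h1 : 2 * (t / 2 ^ (m+1)) ≤ t / 2 ^ m := by
      have : t / 2 ^ (m+1) = t / 2 ^ m / 2 := by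
        rw [pow_succ, Nat.div_div_eq_div_mul]
      omega
    omega

lemma sum_u_lev_le (hN : Monotone N) (t : ℕ) :
    ∑ i ∈ Finset.range (t+1), u N (lev N i) ≤ (t+1) * u N 0 + t := by
  have hsplit : Finset.range (t+1) = insert 0 (Finset.Icc 1 t) := by
    rw [Finset.range_eq_Ico, Finset.Ico_add_one_right_eq_Icc]
    rw [show Finset.Icc 1 t = Finset.Ioc 0 t from rfl, Finset.Ioc_insert_left (Nat.zero_le t)]
  rw [hsplit, Finset.sum_insert (by simp), lev_zero]
  have key : ∑ i ∈ Finset.Icc 1 t, u N (lev N i) ≤ t * u N 0 + t := by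
    have step1 : ∑ i ∈ Finset.Icc 1 t, u N (lev N i)
        = ∑ i ∈ Finset.Icc 1 t, (u N 0 + ∑ p ∈ Finset.Icc 1 i, (if M N p ∣ i then u N p - u N (p-1) else 0)) := by
      apply Finset.sum_congr rfl
      intro i hi
      exact u_lev_eq N hN i (Finset.mem_Icc.mp hi).1
    rw [step1, Finset.sum_add_distrib, Finset.sum_const, Nat.card_Icc]
    simp only [Nat.add_sub_cancel, smul_eq_mul]
    have step2 : ∑ i ∈ Finset.Icc 1 t, ∑ p ∈ Finset.Icc 1 i, (if M N p ∣ i then u N p - u N (p-1) else 0)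
        ≤ ∑ i ∈ Finset.Icc 1 t, ∑ p ∈ Finset.Icc 1 t, (if M N p ∣ i then u N p - u N (p-1) else 0) := by
      apply Finset.sum_le_sum
      intro i hi
      apply Finset.sum_le_sum_of_subset
      exact Finset.Icc_subset_Icc_right (Finset.mem_Icc.mp hi).2
    have step3 : ∑ i ∈ Finset.Icc 1 t, ∑ p ∈ Finset.Icc 1 t, (if M N p ∣ i then u N p - u N (p-1) else 0)
        = ∑ p ∈ Finset.Icc 1 t, (u N p - u N (p-1)) * (t / M N p) := by
      rw [Finset.sum_comm]
      apply Finset.sum_congr rfl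
      intro p _
      rw [← Finset.sum_filter, Finset.sum_const, smul_eq_mul, mul_comm]
      congr 1
      exact Nat.Ioc_filter_dvd_card_eq_div t (M N p)
    have step4 : ∑ p ∈ Finset.Icc 1 t, (u N p - u N (p-1)) * (t / M N p) ≤ t := by
      have hterm : ∀ p ∈ Finset.Icc 1 t, (u N p - u N (p-1)) * (t / M N p) ≤ t / 2 ^ p := by
        intro p hp
        have hp1 : 1 ≤ p := (Finset.mem_Icc.mp hp).1
        have h1 : t / M N p ≤ t / (2 ^ p * u N p) :=
          Nat.div_le_div_left (pow_mul_u_le N p hp1)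
            (Nat.mul_pos (by positivity) (Nat.succ_pos _))
        have h2 : t / (2 ^ p * u N p) = t / 2 ^ p / u N p := by
          rw [Nat.div_div_eq_div_mul]
        calc (u N p - u N (p-1)) * (t / M N p) ≤ u N p * (t / 2 ^ p / u N p) := by
              apply Nat.mul_le_mul (Nat.sub_le _ _)
              omega
          _ ≤ t / 2 ^ p := by
              rw [mul_comm]; exact Nat.div_mul_le_self _ _
      calc ∑ p ∈ Finset.Icc 1 t, (u N p - u N (p-1)) * (t / M N p)
          ≤ ∑ p ∈ Finset.Icc 1 t, t / 2 ^ p := Finset.sum_le_sum hterm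
        _ ≤ t := le_trans (Nat.le_add_right _ _) (sum_halves t t)
    omega
  have hx : (t+1) * u N 0 = t * u N 0 + u N 0 := by ring
  omega

lemma f_add_u_le (hN : Monotone N) (t : ℕ) :
    f N t + u N (lev N t) ≤ 2 * ∑ i ∈ Finset.range (t+1), u N (lev N i) := by
  induction t with
  | zero =>
    show 0 + u N (lev N 0) ≤ 2 * ∑ i ∈ Finset.range 1, u N (lev N i)
    simp only [Finset.sum_range_one]
    omega
  | succ t ih =>
    have hf : f N (t+1) = f N t + u N (lev N t) + u N (lev N (t+1)) := rfl
    rw [hf, Finset.sum_range_succ]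
    omega

lemma f_le (hN : Monotone N) (t : ℕ) : f N t ≤ (2 * (u N 0 + 1)) * (t + 1) := by
  have h1 := f_add_u_le N hN t
  have h2 := sum_u_lev_le N hN t
  have h3 : f N t ≤ 2 * ((t+1) * u N 0 + t) := by omega
  nlinarith


lemma nat_count (X Mk Mk2 a b : ℕ) (hMk : 1 ≤ Mk) (h2 : 2 * Mk ≤ Mk2)
    (hlow : X / Mk ≤ a + X / Mk2) (hab : a ≤ b) : X / Mk / 2 ≤ b := by
  have h1 : X / Mk2 ≤ X / (2 * Mk) := Nat.div_le_div_left h2 (by omega)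
  have h3 : X / (2 * Mk) = X / Mk / 2 := by rw [mul_comm, ← Nat.div_div_eq_div_mul]
  omega

lemma nat_arith (Cc Mk T cnt : ℕ) (hCc : 2 ≤ Cc) (hMk : 1 ≤ Mk)
    (hT : 8 * Cc * Mk ≤ T) (hcnt : (T / Cc - 1) / Mk / 2 ≤ cnt) :
    T ≤ 16 * Cc * Mk * cnt := by
  obtain ⟨q, hq⟩ : ∃ q, T / Cc = q := ⟨_, rfl⟩
  obtain ⟨m, hm⟩ : ∃ m, (q - 1) / Mk = m := ⟨_, rfl⟩
  rw [hq, hm] at hcnt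
  have hT1 : 16 ≤ T := by nlinarith
  have e1 : Cc * q + T % Cc = T := by rw [← hq]; exact Nat.div_add_mod T Cc
  have e2 : T % Cc < Cc := Nat.mod_lt T (by omega)
  have e3 : Mk * m + (q - 1) % Mk = q - 1 := by rw [← hm]; exact Nat.div_add_mod (q - 1) Mk
  have e4 : (q - 1) % Mk < Mk := Nat.mod_lt _ (by omega)
  have e5 : 8 * Mk ≤ q := by
    rw [← hq, Nat.le_div_iff_mul_le (show 0 < Cc by omega)]
    calc 8 * Mk * Cc = 8 * Cc * Mk := by ring
      _ ≤ T := hT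
  have hm2 : m ≤ 2 * cnt + 1 := by omega
  have h6 : q ≤ Mk * m + Mk := by omega
  have h7 : Mk * m ≤ Mk * (2 * cnt + 1) := Nat.mul_le_mul_left _ hm2
  have h8 : q ≤ 2 * (Mk * cnt) + 2 * Mk := by
    have hr : Mk * (2 * cnt + 1) = 2 * (Mk * cnt) + Mk := by ring
    omega
  have h9 : 3 ≤ cnt := by
    have h1 : Mk * 6 ≤ Mk * (2 * cnt) := by
      have hr : Mk * (2 * cnt) = 2 * (Mk * cnt) := by ring
      omega
    have := Nat.le_of_mul_le_mul_left h1 (show 0 < Mk by omega)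
    omega
  have h10 : 3 * Mk ≤ Mk * cnt := by
    calc 3 * Mk = Mk * 3 := by ring
      _ ≤ Mk * cnt := Nat.mul_le_mul_left _ h9
  have h11 : q + 1 ≤ 16 * (Mk * cnt) := by omega
  have h12 : Cc * (q + 1) ≤ Cc * (16 * (Mk * cnt)) := Nat.mul_le_mul_left _ h11
  have h13 : Cc * (16 * (Mk * cnt)) = 16 * Cc * Mk * cnt := by ring
  have h14 : Cc * (q + 1) = Cc * q + Cc := by ring
  omega

end DisjointDensityAux

/-- The lower density of a set `A ⊆ ℕ`: `liminf_{N→∞} card {n ∈ A : n ≤ N} / N`. -/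
noncomputable def lowerDensity (A : Set ℕ) : ℝ≥0∞ :=
  Filter.atTop.liminf fun N : ℕ => (Set.ncard {n ∈ A | n ≤ N} : ℝ≥0∞) / (N : ℝ≥0∞)

/-- Given a strictly increasing sequence `(N_k)` of natural numbers, there is a pairwise
disjoint sequence `(J_k)` of subsets of `ℕ` such that each `J_k` has positive lower
density, `|n - m| ≥ N_k + N_p` whenever `n ≠ m`, `n ∈ J_k`, `m ∈ J_p`, and `n ≥ N_k`
for every `n ∈ J_k`. -/
theorem exists_disjoint_sets_of_positive_lowerDensity (N : ℕ → ℕ) (hN : StrictMono N) :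
    ∃ J : ℕ → Set ℕ,
      (Pairwise fun k p => Disjoint (J k) (J p)) ∧
      (∀ k, 0 < lowerDensity (J k)) ∧
      (∀ k p : ℕ, ∀ n ∈ J k, ∀ m ∈ J p, n ≠ m → (N k + N p : ℤ) ≤ |(n : ℤ) - (m : ℤ)|) ∧
      (∀ k, ∀ n ∈ J k, N k ≤ n) := by
  classical
  open DisjointDensityAux in
  refine ⟨fun k => f N '' {t | 0 < t ∧ lev N t = k}, ?_, ?_, ?_, ?_⟩
  · -- pairwise disjoint
    intro k p hkp
    rw [Set.disjoint_left]
    rintro n ⟨t, ⟨ht0, htk⟩, rfl⟩ ⟨s, ⟨hs0, hsp⟩, hfs⟩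
    have hts : s = t := (f_strictMono N).injective hfs
    exact hkp (by rw [← htk, ← hts, hsp])
  · -- positive lower density
    intro k
    have hCc2 : 2 ≤ 2 * (u N 0 + 1) := by omega
    have hMk1 : 1 ≤ M N k := M_pos N k
    set E : ℕ := 16 * (2 * (u N 0 + 1)) * M N k with hE
    have hE1 : 1 ≤ E := Nat.mul_pos (by omega) hMk1
    have hE0 : (E : ℝ≥0∞) ≠ 0 := by
      simp only [ne_eq, Nat.cast_eq_zero]
      omega
    have hEtop : (E : ℝ≥0∞) ≠ ⊤ := ENNReal.natCast_ne_top E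
    have hkey : ∀ T : ℕ, 8 * (2 * (u N 0 + 1)) * M N k ≤ T →
        T ≤ E * ({n ∈ f N '' {t | 0 < t ∧ lev N t = k} | n ≤ T}).ncard := by
      intro T hT
      have hcnt : (T / (2 * (u N 0 + 1)) - 1) / M N k / 2 ≤
          ({n ∈ f N '' {t | 0 < t ∧ lev N t = k} | n ≤ T}).ncard := by
        set X : ℕ := T / (2 * (u N 0 + 1)) - 1 with hX
        set A : Finset ℕ := ((Finset.Ioc 0 X).filter (fun t => lev N t = k)).image (f N) with hA
        have hsub : (↑A : Set ℕ) ⊆ {n ∈ f N '' {t | 0 < t ∧ lev N t = k} | n ≤ T} := by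
          intro n hn
          simp only [hA, Finset.coe_image, Set.mem_image, Finset.mem_coe, Finset.mem_filter,
            Finset.mem_Ioc] at hn
          obtain ⟨t, ⟨⟨ht0, htX⟩, htk⟩, rfl⟩ := hn
          refine ⟨⟨t, ⟨ht0, htk⟩, rfl⟩, ?_⟩
          have h1 : f N t ≤ (2 * (u N 0 + 1)) * (t + 1) := f_le N hN.monotone t
          have hq1 : 1 ≤ T / (2 * (u N 0 + 1)) := by omega
          have h2 : t + 1 ≤ T / (2 * (u N 0 + 1)) := by omega
          have h3 : (2 * (u N 0 + 1)) * (t + 1) ≤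
              (2 * (u N 0 + 1)) * (T / (2 * (u N 0 + 1))) := Nat.mul_le_mul_left _ h2
          have h4 : (2 * (u N 0 + 1)) * (T / (2 * (u N 0 + 1))) ≤ T := by
            rw [mul_comm]
            exact Nat.div_mul_le_self T _
          omega
        have hfin : ({n ∈ f N '' {t | 0 < t ∧ lev N t = k} | n ≤ T}).Finite :=
          (Set.finite_Iic T).subset (fun n hn => hn.2)
        have hcard1 : A.card ≤ ({n ∈ f N '' {t | 0 < t ∧ lev N t = k} | n ≤ T}).ncard := by
          rw [← Set.ncard_coe_finset]
          exact Set.ncard_le_ncard hsub hfin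
        have hcard2 : A.card = ((Finset.Ioc 0 X).filter (fun t => lev N t = k)).card :=
          Finset.card_image_of_injective _ (f_strictMono N).injective
        have hunion : (Finset.Ioc 0 X).filter (fun t => M N k ∣ t) ⊆
            ((Finset.Ioc 0 X).filter (fun t => lev N t = k)) ∪
            ((Finset.Ioc 0 X).filter (fun t => M N (k+1) ∣ t)) := by
          intro t ht
          simp only [Finset.mem_filter, Finset.mem_union, Finset.mem_Ioc] at *
          obtain ⟨⟨ht0, htX⟩, hdvd⟩ := ht
          by_cases h2 : M N (k+1) ∣ t
          · right; exact ⟨⟨ht0, htX⟩, h2⟩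
          · left; exact ⟨⟨ht0, htX⟩, (lev_eq_iff N ht0).mpr ⟨hdvd, h2⟩⟩
        have hlow : X / M N k ≤
            ((Finset.Ioc 0 X).filter (fun t => lev N t = k)).card + X / M N (k+1) := by
          have h1 := (Finset.card_le_card hunion).trans (Finset.card_union_le _ _)
          rw [Nat.Ioc_filter_dvd_card_eq_div, Nat.Ioc_filter_dvd_card_eq_div] at h1
          exact h1
        exact nat_count X (M N k) (M N (k+1))
          ((Finset.Ioc 0 X).filter (fun t => lev N t = k)).card
          ({n ∈ f N '' {t | 0 < t ∧ lev N t = k} | n ≤ T}).ncard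
          hMk1 (two_mul_M_le N k) hlow (hcard2 ▸ hcard1)
      have := nat_arith (2 * (u N 0 + 1)) (M N k) T
        ({n ∈ f N '' {t | 0 < t ∧ lev N t = k} | n ≤ T}).ncard hCc2 hMk1 hT hcnt
      exact this
    have hlim : (E : ℝ≥0∞)⁻¹ ≤ lowerDensity (f N '' {t | 0 < t ∧ lev N t = k}) := by
      apply Filter.le_liminf_of_le (by isBoundedDefault)
      filter_upwards [Filter.eventually_ge_atTop (8 * (2 * (u N 0 + 1)) * M N k)] with T hT
      have hnat := hkey T hT
      have hT16 : 16 ≤ T := by nlinarith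
      have hT0 : (T : ℝ≥0∞) ≠ 0 := by
        simp only [ne_eq, Nat.cast_eq_zero]
        omega
      rw [ENNReal.le_div_iff_mul_le (Or.inl hT0) (Or.inl (ENNReal.natCast_ne_top T))]
      have hcast : (T : ℝ≥0∞) ≤ (E : ℝ≥0∞) *
          (({n ∈ f N '' {t | 0 < t ∧ lev N t = k} | n ≤ T}).ncard : ℝ≥0∞) := by
        have h := hnat
        have := (Nat.cast_le (α := ℝ≥0∞)).mpr h
        push_cast at this
        exact this
      calc (E : ℝ≥0∞)⁻¹ * T
          ≤ (E : ℝ≥0∞)⁻¹ * ((E : ℝ≥0∞) *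
            (({n ∈ f N '' {t | 0 < t ∧ lev N t = k} | n ≤ T}).ncard : ℝ≥0∞)) :=
            mul_le_mul_right hcast _
        _ = (({n ∈ f N '' {t | 0 < t ∧ lev N t = k} | n ≤ T}).ncard : ℝ≥0∞) := by
            rw [← mul_assoc, ENNReal.inv_mul_cancel hE0 hEtop, one_mul]
    calc (0 : ℝ≥0∞) < (E : ℝ≥0∞)⁻¹ := ENNReal.inv_pos.mpr hEtop
      _ ≤ _ := hlim
  · -- separation
    rintro k p n ⟨t, ⟨ht0, htk⟩, rfl⟩ m ⟨s, ⟨hs0, hsp⟩, rfl⟩ hne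
    have hts : t ≠ s := fun h => hne (by rw [h])
    rcases hts.lt_or_gt with h | h
    · have hsep := sep N h
      have hmono := (f_strictMono N) h
      rw [abs_sub_comm, abs_of_nonneg (by push_cast; omega)]
      have : u N (lev N t) = N k + 1 := by rw [htk]; rfl
      have : u N (lev N s) = N p + 1 := by rw [hsp]; rfl
      simp only [u, htk, hsp] at hsep
      push_cast
      omega
    · have hsep := sep N h
      have hmono := (f_strictMono N) h
      rw [abs_of_nonneg (by push_cast; omega)]
      simp only [u, htk, hsp] at hsep
      push_cast
      omega
  · -- n ≥ N k
    rintro k n ⟨t, ⟨ht0, htk⟩, rfl⟩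
    have := u_le_f N t ht0
    rw [htk] at this
    have hu : u N k = N k + 1 := rfl
    omega
end
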